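/- An effect algebra with n elements has at most (n-1)(n-2)/2 defined sums among pairs (e, f) with e, f both different from 0 and 1 (counting ordered pairs up to symmetry, i.e., at least (n-2)(n-3)/2 of the (n-2)² nontrivial ordered pairs are undefined). -/

import Mathlib

/-- An effect algebra: a set with `zero`, `one`, a partial commutative associative
sum (modelled as an `Option`-valued operation), unique complements, and
`e ⊕ 1` defined only for `e = 0`. -/
structure EffectAlgebra (E : Type*) where
  zero : E
  one : E
  add : E → E → Option E
  comm : ∀ e f, add e f = add f e
  assoc : ∀ e f g, (add e f).bind (fun s => add s g) = (add f g).bind (fun s => add e s)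
  compl : E → E
  add_compl : ∀ e, add e (compl e) = some one
  compl_unique : ∀ e f, add e f = some one → f = compl e
  one_max : ∀ e f, add e one = some f → e = zero

namespace EffectAlgebra

variable {E : Type*}

/-- Intrinsic order: `e ≤ f` iff `f = e ⊕ g` for some `g`. -/
def le (A : EffectAlgebra E) (e f : E) : Prop := ∃ g, A.add e g = some f

/-- Iterated sum `e ⊕ e ⊕ ⋯ ⊕ e` (`n` copies), when defined. -/
def nsum (A : EffectAlgebra E) (e : E) : ℕ → Option E
  | 0 => some A.zero
  | n + 1 => (nsum A e n).bind (fun s => A.add e s)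

end EffectAlgebra

/-- The underlying set `{k/(n-1) : 0 ≤ k ≤ n-1}` of the scale effect algebra `S_n`. -/
def scaleSet (n : ℕ) : Set ℝ := {x | ∃ k : ℕ, k ≤ n - 1 ∧ x = (k : ℝ) / ((n : ℝ) - 1)}

namespace EffectAlgebra

variable {F : Type*} (A : EffectAlgebra F)

lemma compl_compl (e : F) : A.compl (A.compl e) = e := by
  have h : A.add (A.compl e) e = some A.one := by rw [A.comm]; exact A.add_compl e
  exact (A.compl_unique _ _ h).symm

lemma compl_inj {a b : F} (h : A.compl a = A.compl b) : a = b := by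
  have := congrArg A.compl h
  rwa [A.compl_compl, A.compl_compl] at this

lemma compl_one : A.compl A.one = A.zero := by
  refine A.one_max _ A.one ?_
  rw [A.comm]; exact A.add_compl A.one

lemma zero_add_one : A.add A.zero A.one = some A.one := by
  have := A.add_compl A.one
  rw [A.compl_one] at this
  rw [A.comm]; exact this

lemma zero_add (e : F) : A.add A.zero e = some e := by
  have h := A.assoc A.zero e (A.compl e)
  rw [A.add_compl e] at h
  simp only [Option.bind_some] at h
  rw [A.zero_add_one] at h
  cases hx : A.add A.zero e with
  | none => rw [hx] at h; simp at h
  | some x =>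
      rw [hx] at h
      simp only [Option.bind_some] at h
      have hcx : A.compl e = A.compl x := A.compl_unique x (A.compl e) h
      exact congrArg some (A.compl_inj hcx.symm)

lemma add_zero (e : F) : A.add e A.zero = some e := by
  rw [A.comm]; exact A.zero_add e

lemma aux_compl {a b s : F} (h : A.add a b = some s) :
    A.add (A.compl s) a = some (A.compl b) := by
  -- first: add b (compl s) = some (compl a)
  have h1 := A.assoc a b (A.compl s)
  rw [h] at h1
  simp only [Option.bind_some] at h1
  rw [A.add_compl s] at h1
  have h1' : (A.add b (A.compl s)).bind (fun t => A.add a t) = some A.one := h1.symm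
  obtain ⟨u, hu, hau⟩ : ∃ u, A.add b (A.compl s) = some u ∧ A.add a u = some A.one := by
    cases hbc : A.add b (A.compl s) with
    | none => rw [hbc] at h1'; simp at h1'
    | some u => rw [hbc] at h1'; exact ⟨u, rfl, h1'⟩
  have hu' : u = A.compl a := A.compl_unique a u hau
  -- now: assoc b (compl s) a
  have h2 := A.assoc b (A.compl s) a
  rw [hu, hu'] at h2
  simp only [Option.bind_some] at h2
  have hca : A.add (A.compl a) a = some A.one := by rw [A.comm]; exact A.add_compl a
  rw [hca] at h2
  obtain ⟨v, hv, hbv⟩ : ∃ v, A.add (A.compl s) a = some v ∧ A.add b v = some A.one := by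
    cases hsa : A.add (A.compl s) a with
    | none => rw [hsa] at h2; simp at h2
    | some v =>
        rw [hsa] at h2; simp only [Option.bind_some] at h2; exact ⟨v, rfl, h2.symm⟩
  have : v = A.compl b := A.compl_unique b v hbv
  rw [hv, this]

lemma cancel {a b c s : F} (h1 : A.add a b = some s) (h2 : A.add a c = some s) : b = c := by
  have e1 := A.aux_compl h1
  have e2 := A.aux_compl h2
  rw [e1] at e2
  exact A.compl_inj (Option.some_injective _ e2)

lemma cancel_left {a b c s : F} (h1 : A.add a c = some s) (h2 : A.add b c = some s) : a = b := by
  rw [A.comm] at h1 h2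
  exact A.cancel h1 h2

lemma eq_zero_of_add_eq_self {a b : F} (h : A.add a b = some b) : a = A.zero := by
  have h1 : A.add b a = some b := by rw [A.comm]; exact h
  exact A.cancel h1 (A.add_zero b)

lemma eq_zero_of_add_eq_zero {a b : F} (h : A.add a b = some A.zero) : b = A.zero := by
  have h1 := A.assoc a b A.one
  rw [h] at h1
  simp only [Option.bind_some] at h1
  rw [A.zero_add_one] at h1
  cases hb1 : A.add b A.one with
  | none => rw [hb1] at h1; simp at h1
  | some w => exact A.one_max b w hb1

lemma antisym {e f e' s : F} (h1 : A.add e f = some s) (h2 : A.add e' s = some f)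
    (he : e ≠ A.zero) : False := by
  have h3 := A.assoc e' e f
  rw [h1] at h3
  simp only [Option.bind_some] at h3
  rw [h2] at h3
  obtain ⟨t, ht, htf⟩ : ∃ t, A.add e' e = some t ∧ A.add t f = some f := by
    cases hee : A.add e' e with
    | none => rw [hee] at h3; simp at h3
    | some t => rw [hee] at h3; exact ⟨t, rfl, h3⟩
  have : t = A.zero := A.eq_zero_of_add_eq_self htf
  rw [this] at ht
  exact he (A.eq_zero_of_add_eq_zero ht)

end EffectAlgebra

theorem defined_sums_le {E : Type*} [Fintype E] [DecidableEq E] (A : EffectAlgebra E) :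
    (Finset.univ.filter (fun p : E × E =>
        p.1 ≠ A.zero ∧ p.1 ≠ A.one ∧ p.2 ≠ A.zero ∧ p.2 ≠ A.one ∧
        (A.add p.1 p.2).isSome)).card
      ≤ (Fintype.card E - 1) * (Fintype.card E - 2) / 2 := by
  classical
  set S := (Finset.univ.filter (fun p : E × E =>
        p.1 ≠ A.zero ∧ p.1 ≠ A.one ∧ p.2 ≠ A.zero ∧ p.2 ≠ A.one ∧
        (A.add p.1 p.2).isSome)) with hS
  set T := (Finset.univ.erase A.zero).powersetCard 2 with hT
  -- facts about members of S
  have hmem : ∀ p ∈ S, p.1 ≠ A.zero ∧ p.2 ≠ A.zero ∧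
      ∃ s, A.add p.1 p.2 = some s ∧ s ≠ A.zero ∧ s ≠ p.2 := by
    intro p hp
    rw [hS, Finset.mem_filter] at hp
    obtain ⟨-, h1, -, h2, -, hsome⟩ := hp
    obtain ⟨s, hs⟩ := Option.isSome_iff_exists.mp hsome
    refine ⟨h1, h2, s, hs, ?_, ?_⟩
    · intro h; rw [h] at hs; exact h2 (A.eq_zero_of_add_eq_zero hs)
    · intro h; rw [h] at hs; exact h1 (A.eq_zero_of_add_eq_self hs)
  have hcard : S.card ≤ T.card := by
    apply Finset.card_le_card_of_injOn
      (fun p => ({p.2, (A.add p.1 p.2).getD A.zero} : Finset E))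
    · intro p hp
      obtain ⟨h1, h2, s, hs, hs0, hsf⟩ := hmem p hp
      rw [hT, Finset.mem_coe, Finset.mem_powersetCard]
      constructor
      · intro x hx
        rw [Finset.mem_insert, Finset.mem_singleton] at hx
        rcases hx with rfl | rfl
        · exact Finset.mem_erase.mpr ⟨h2, Finset.mem_univ _⟩
        · rw [hs]; exact Finset.mem_erase.mpr ⟨hs0, Finset.mem_univ _⟩
      · beta_reduce
        rw [hs]
        exact Finset.card_pair (Ne.symm hsf)
    · intro p hp q hq heq
      obtain ⟨hp1, hp2, s, hs, hs0, hsf⟩ := hmem p hp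
      obtain ⟨hq1, hq2, t, ht, ht0, htf⟩ := hmem q hq
      simp only [hs, ht, Option.getD_some] at heq
      have h2 : p.2 = q.2 ∨ p.2 = t := by
        have : p.2 ∈ ({q.2, t} : Finset E) := by
          rw [← heq]; exact Finset.mem_insert_self _ _
        simpa using this
      have hss : s ∈ ({q.2, t} : Finset E) := by
        rw [← heq]; simp
      rw [Finset.mem_insert, Finset.mem_singleton] at hss
      rcases h2 with h2 | h2
      · -- p.2 = q.2 ; then s = t, cancel
        have hst : s = t := by
          rcases hss with h | h
          · exact absurd (h2 ▸ h) hsf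
          · exact h
        have : p.1 = q.1 := by
          refine A.cancel_left hs ?_
          rw [h2, hst]; exact ht
        exact Prod.ext this h2
      · -- p.2 = t : then also s = q.2 (else s = t = p.2 contra), antisymmetry
        have hsq : s = q.2 := by
          rcases hss with h | h
          · exact h
          · exact absurd (h ▸ h2.symm) hsf
        exfalso
        exact A.antisym ht (by rw [← h2, ← hsq]; exact hs) hq1
  refine hcard.trans ?_
  rw [hT, Finset.card_powersetCard,
    Finset.card_erase_of_mem (Finset.mem_univ _), Finset.card_univ]
  rw [Nat.choose_two_right]
  have : Fintype.card E - 1 - 1 = Fintype.card E - 2 := by omega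
  rw [this]
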